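/- Let X be a metric space admitting an injective uniform embedding into a countable discrete group G equipped with a proper left-invariant metric. Then X admits a free and globally controlled atlas; in particular κ_X(R) = 1 for all R > 0. -/
import Mathlib


open Metric

def IsUniformEmbeddingMap {X Y : Type*} [MetricSpace X] [MetricSpace Y]
    (f : X → Y) : Prop :=
  (∀ R > (0:ℝ), ∃ S > (0:ℝ), ∀ x y : X, dist x y ≤ R → dist (f x) (f y) ≤ S) ∧
  (∀ R > (0:ℝ), ∃ S > (0:ℝ), ∀ x y : X, dist (f x) (f y) ≤ R → dist x y ≤ S)

/-- A partial bijection of `X`: a subset of `X × X` both of whose coordinate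
projections are injective. -/
def IsPartialBijection {X : Type*} (t : Set (X × X)) : Prop :=
  ∀ p ∈ t, ∀ q ∈ t, (p.1 = q.1 → p = q) ∧ (p.2 = q.2 → p = q)

/-- A partial translation of `X`: a partial bijection moving points a uniformly
bounded distance. -/
def IsPartialTranslation {X : Type*} [MetricSpace X] (t : Set (X × X)) : Prop :=
  IsPartialBijection t ∧ ∃ B : ℝ, ∀ p ∈ t, dist p.1 p.2 ≤ B

/-- `σ` is a partial cotranslation for the family `T` of partial translations:
`σ` is a partial bijection, and whenever `(x,y) ∈ t ∈ T` and `σ` is defined at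
both `x` and `y`, then `(σ x, σ y) ∈ t`.  Here `(x, x') ∈ σ` means `σ x = x'`. -/
def IsPartialCotranslationFor {X : Type*} [MetricSpace X]
    (T : Set (Set (X × X))) (σ : Set (X × X)) : Prop :=
  IsPartialBijection σ ∧
    ∀ t ∈ T, ∀ x y x' y' : X, (x, y) ∈ t → (x, x') ∈ σ → (y, y') ∈ σ → (x', y') ∈ t

/-- `(T, Sig)` is an atlas chart at scale `R` with multiplicity bound `k`:
`T` is a finite set of pairwise disjoint partial translations whose union
contains the `R`-neighbourhood of the diagonal, `Sig` is a set of partial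
cotranslations for `T`, at most `k` elements of `Sig` send `x` to `x'` for any
`x, x'`, and the elements of `Sig` act transitively on each `t ∈ T`. -/
def IsAtlasAt {X : Type*} [MetricSpace X] (R : ℝ) (k : ℕ)
    (T : Set (Set (X × X))) (Sig : Set (Set (X × X))) : Prop :=
  T.Finite ∧
  (∀ t ∈ T, IsPartialTranslation t) ∧
  T.Pairwise Disjoint ∧
  (∀ x y : X, dist x y < R → ∃ t ∈ T, (x, y) ∈ t) ∧
  (∀ σ ∈ Sig, IsPartialCotranslationFor T σ) ∧
  (∀ x x' : X, {σ ∈ Sig | (x, x') ∈ σ}.Finite ∧ {σ ∈ Sig | (x, x') ∈ σ}.ncard ≤ k) ∧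
  (∀ t ∈ T, ∀ x y x' y' : X, (x, y) ∈ t → (x', y') ∈ t →
    ∃ σ ∈ Sig, (x, x') ∈ σ ∧ (y, y') ∈ σ)

/-- The cotranslation orbit of the pair `(x, y)` under `Sig`. -/
def cotranslationOrbit {X : Type*} (Sig : Set (Set (X × X))) (x y : X) :
    Set (X × X) :=
  {p : X × X | ∃ σ ∈ Sig, (x, p.1) ∈ σ ∧ (y, p.2) ∈ σ}

/-- An atlas chart is globally controlled if every cotranslation orbit is a
partial translation. -/
def IsGloballyControlledAt {X : Type*} [MetricSpace X]
    (Sig : Set (Set (X × X))) : Prop :=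
  ∀ x y : X, IsPartialTranslation (cotranslationOrbit Sig x y)

theorem stmt11 (X : Type) [MetricSpace X]
    (G : Type) [Group G] [Countable G] [MetricSpace G]
    (hinv : ∀ g x y : G, dist (g * x) (g * y) = dist x y)
    (hproper : ∀ (x : G) (r : ℝ), (closedBall x r).Finite)
    (φ : X → G) (hinj : Function.Injective φ)
    (hue : IsUniformEmbeddingMap φ) :
    ∀ R > (0:ℝ), ∃ T Sig : Set (Set (X × X)),
      IsAtlasAt R 1 T Sig ∧ IsGloballyControlledAt Sig := by

  intro R hR
  obtain ⟨S, hS, hSprop⟩ := hue.1 R hR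
  obtain ⟨B, hB, hBprop⟩ := hue.2 S hS
  -- key facts about φ-distance
  have hdist : ∀ x y : X, dist (φ x) (φ y) = dist (1:G) ((φ x)⁻¹ * φ y) := by
    intro x y
    have := hinv (φ x) 1 ((φ x)⁻¹ * φ y)
    simpa using this
  refine ⟨(fun g => {p : X × X | φ p.2 = φ p.1 * g}) '' (closedBall (1:G) S),
          Set.range (fun h : G => {p : X × X | φ p.2 = h * φ p.1}), ?_, ?_⟩
  · refine ⟨(hproper 1 S).image _, ?_, ?_, ?_, ?_, ?_, ?_⟩
    · -- each t is a partial translation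
      rintro t ⟨g, hg, rfl⟩
      refine ⟨?_, B, ?_⟩
      · rintro ⟨a, b⟩ hp ⟨c, d⟩ hq
        simp only [Set.mem_setOf_eq] at hp hq
        constructor
        · intro h1
          simp only at h1
          subst h1
          have : b = d := hinj (hp.trans hq.symm)
          simp [this]
        · intro h2
          simp only at h2
          subst h2
          have : φ a * g = φ c * g := hp.symm.trans hq
          have : a = c := hinj (mul_right_cancel this)
          simp [this]
      · rintro ⟨a, b⟩ hp
        simp only [Set.mem_setOf_eq] at hp
        apply hBprop
        have h1 : dist (φ a) (φ b) = dist (1:G) g := by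
          rw [hdist]
          congr 1
          rw [hp, inv_mul_cancel_left]
        rw [h1, dist_comm]
        simpa [Metric.mem_closedBall] using hg
    · -- pairwise disjoint
      rintro t ⟨g, hg, rfl⟩ t' ⟨g', hg', rfl⟩ hne
      rw [Set.disjoint_left]
      rintro ⟨a, b⟩ hp hq
      simp only [Set.mem_setOf_eq] at hp hq
      have : g = g' := mul_left_cancel (hp.symm.trans hq)
      exact hne (by rw [this])
    · -- covering
      intro x y hxy
      refine ⟨_, ⟨(φ x)⁻¹ * φ y, ?_, rfl⟩, ?_⟩
      · rw [Metric.mem_closedBall, dist_comm, ← hdist]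
        exact hSprop x y hxy.le
      · simp [mul_inv_cancel_left]
    · -- cotranslations
      rintro σ ⟨h, rfl⟩
      constructor
      · rintro ⟨a, b⟩ hp ⟨c, d⟩ hq
        simp only [Set.mem_setOf_eq] at hp hq
        constructor
        · intro h1
          simp only at h1
          subst h1
          have : b = d := hinj (hp.trans hq.symm)
          simp [this]
        · intro h2
          simp only at h2
          subst h2
          have : h * φ a = h * φ c := hp.symm.trans hq
          have : a = c := hinj (mul_left_cancel this)
          simp [this]
      · rintro t ⟨g, hg, rfl⟩ x y x' y' hxy hx hy
        simp only [Set.mem_setOf_eq] at hxy hx hy ⊢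
        rw [hy, hxy, hx, mul_assoc]
    · -- multiplicity one
      intro x x'
      have hsub : {σ ∈ Set.range (fun h : G => {p : X × X | φ p.2 = h * φ p.1}) |
          (x, x') ∈ σ} ⊆ {{p : X × X | φ p.2 = φ x' * (φ x)⁻¹ * φ p.1}} := by
        rintro σ ⟨⟨h, rfl⟩, hmem⟩
        simp only [Set.mem_setOf_eq] at hmem
        have : h = φ x' * (φ x)⁻¹ := by
          rw [hmem, mul_inv_cancel_right]
        rw [Set.mem_singleton_iff, this]
      refine ⟨Set.Finite.subset (Set.finite_singleton _) hsub, ?_⟩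
      calc _ ≤ ({{p : X × X | φ p.2 = φ x' * (φ x)⁻¹ * φ p.1}} :
              Set (Set (X × X))).ncard :=
            Set.ncard_le_ncard hsub (Set.finite_singleton _)
        _ = 1 := Set.ncard_singleton _
    · -- transitivity
      rintro t ⟨g, hg, rfl⟩ x y x' y' hxy hx'y'
      simp only [Set.mem_setOf_eq] at hxy hx'y'
      refine ⟨_, ⟨φ x' * (φ x)⁻¹, rfl⟩, ?_, ?_⟩
      · simp [inv_mul_cancel_right]
      · simp only [Set.mem_setOf_eq]
        rw [hx'y', hxy, ← mul_assoc, inv_mul_cancel_right]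
  · -- globally controlled
    intro x y
    obtain ⟨B', hB', hB'prop⟩ := hue.2 (dist (φ x) (φ y) + 1) (by positivity)
    constructor
    · rintro ⟨a, b⟩ hp ⟨c, d⟩ hq
      obtain ⟨σ, ⟨h, rfl⟩, ha, hb⟩ := hp
      obtain ⟨σ', ⟨h', rfl⟩, hc, hd⟩ := hq
      simp only [Set.mem_setOf_eq] at ha hb hc hd
      constructor
      · intro h1
        simp only at h1
        subst h1
        have hh : h = h' := by
          have : h * φ x = h' * φ x := ha.symm.trans hc
          exact mul_right_cancel this
        subst hh
        have : b = d := hinj (hb.trans hd.symm)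
        simp [this]
      · intro h2
        simp only at h2
        subst h2
        have hh : h = h' := by
          have : h * φ y = h' * φ y := hb.symm.trans hd
          exact mul_right_cancel this
        subst hh
        have : a = c := hinj (ha.trans hc.symm)
        simp [this]
    · refine ⟨B', ?_⟩
      rintro ⟨a, b⟩ hp
      obtain ⟨σ, ⟨h, rfl⟩, ha, hb⟩ := hp
      simp only [Set.mem_setOf_eq] at ha hb
      apply hB'prop
      have : dist (φ a) (φ b) = dist (φ x) (φ y) := by
        rw [ha, hb, hinv]
      rw [this]
      linarith
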